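/- For an inhomogeneous Galton-Watson tree and k > 0, Cov(Z̃_n, Z̃_{n+k}) = p_{n+k} p_n m_{n+k} (s_n²/m_n − 1), where Z̃_n is the number of leaves in generation n, p_n = f_n(0), m_n = E(Z_n) > 0, and s_n² = Var(Z_n). -/

import Mathlib

open MeasureTheory ProbabilityTheory Finset
open scoped ENNReal

set_option maxHeartbeats 1000000

/-- Covariance of two real random variables. -/
noncomputable def cov {Ω : Type*} [MeasurableSpace Ω] (P : Measure Ω) (f g : Ω → ℝ) : ℝ :=
  ∫ ω, (f ω - ∫ ω', f ω' ∂P) * (g ω - ∫ ω', g ω' ∂P) ∂P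

namespace IgwtAux

set_option linter.unusedSectionVars false

variable {Ω : Type*} [MeasurableSpace Ω] {P : Measure Ω} [IsProbabilityMeasure P]
variable {X : ℕ × ℕ → Ω → ℕ}

/-- The σ-algebra generated by the variables indexed by `S`. -/
def G (X : ℕ × ℕ → Ω → ℕ) (S : Set (ℕ × ℕ)) : MeasurableSpace Ω :=
  ⨆ q ∈ S, MeasurableSpace.comap (X q) inferInstance

lemma G_le (hXmeas : ∀ q, Measurable (X q)) (S : Set (ℕ × ℕ)) :
    G X S ≤ ‹MeasurableSpace Ω› :=
  iSup₂_le fun q _ => (hXmeas q).comap_le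

lemma G_mono {S T : Set (ℕ × ℕ)} (hST : S ⊆ T) : G X S ≤ G X T :=
  iSup₂_le fun q hq => le_iSup₂ (f := fun q _ => MeasurableSpace.comap (X q) inferInstance) q
    (hST hq)

lemma measurable_X_G {S : Set (ℕ × ℕ)} {q : ℕ × ℕ} (hq : q ∈ S) :
    Measurable[G X S] (X q) := by
  have h : MeasurableSpace.comap (X q) inferInstance ≤ G X S :=
    le_iSup₂ (f := fun q _ => MeasurableSpace.comap (X q) inferInstance) q hq
  exact fun s hs => h _ ⟨s, hs, rfl⟩

lemma msetP {α : Type*} {m' : MeasurableSpace α} {N : α → ℕ} (hN : Measurable[m'] N)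
    (pred : ℕ → Prop) : MeasurableSet[m'] {ω | pred (N ω)} :=
  hN (trivial : MeasurableSet {z : ℕ | pred z})

lemma indep_G (hXmeas : ∀ q, Measurable (X q))
    (hindep : iIndepFun X P)
    {S T : Set (ℕ × ℕ)} (hST : Disjoint S T) :
    Indep (G X S) (G X T) P :=
  ProbabilityTheory.indep_iSup_of_disjoint (fun q => (hXmeas q).comap_le) hindep hST

/-- product splits for functions measurable w.r.t. disjoint index sets -/
lemma split (hXmeas : ∀ q, Measurable (X q))
    (hindep : iIndepFun X P)
    {S T : Set (ℕ × ℕ)} (hST : Disjoint S T) {f g : Ω → ℝ≥0∞}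
    (hf : Measurable[G X S] f) (hg : Measurable[G X T] g) :
    ∫⁻ ω, f ω * g ω ∂P = (∫⁻ ω, f ω ∂P) * ∫⁻ ω, g ω ∂P :=
  lintegral_mul_eq_lintegral_mul_lintegral_of_independent_measurableSpace
    (G_le hXmeas S) (G_le hXmeas T) (indep_G hXmeas hindep hST) hf hg

lemma tsum_ind_lt (n : ℕ) : ∑' i : ℕ, (if i < n then (1:ℝ≥0∞) else 0) = n := by
  rw [tsum_eq_sum (s := Finset.range n) (fun b hb => by simp [Finset.mem_range] at hb; simp [hb])]
  rw [Finset.sum_ite_of_true (fun i hi => Finset.mem_range.mp hi)]; simp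

lemma sum_offdiag_nat (n : ℕ) :
    ∑ p ∈ (Finset.range n) ×ˢ (Finset.range n), (if p.1 ≠ p.2 then (1:ℕ) else 0)
      = n * (n - 1) := by
  rw [Finset.sum_product]
  have h : ∀ i ∈ Finset.range n, (∑ j ∈ Finset.range n, if i ≠ j then (1:ℕ) else 0) = n - 1 := by
    intro i hi
    rw [Finset.sum_boole]
    have : Finset.filter (fun j => i ≠ j) (Finset.range n) = (Finset.range n).erase i := by
      ext j; simp [Finset.mem_erase, ne_comm, and_comm]
    rw [this, Finset.card_erase_of_mem hi, Finset.card_range]; simp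
  rw [Finset.sum_congr rfl h]; simp [Finset.card_range]

lemma tsum_ind_offdiag (n : ℕ) :
    ∑' p : ℕ × ℕ, (if p.1 ≠ p.2 ∧ p.1 < n ∧ p.2 < n then (1:ℝ≥0∞) else 0)
      = ((n * (n - 1) : ℕ) : ℝ≥0∞) := by
  rw [tsum_eq_sum (s := (Finset.range n) ×ˢ (Finset.range n)) (fun p hp => by
    simp only [Finset.mem_product, Finset.mem_range] at hp
    simp only [ite_eq_right_iff]; rintro ⟨-, h1, h2⟩; exact absurd ⟨h1, h2⟩ hp)]
  have h : ∀ p ∈ (Finset.range n) ×ˢ (Finset.range n),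
      (if p.1 ≠ p.2 ∧ p.1 < n ∧ p.2 < n then (1:ℝ≥0∞) else 0)
        = ((if p.1 ≠ p.2 then (1:ℕ) else 0 : ℕ) : ℝ≥0∞) := by
    intro p hp
    simp only [Finset.mem_product, Finset.mem_range] at hp
    by_cases h : p.1 = p.2 <;> simp [h, hp.1, hp.2]
  rw [Finset.sum_congr rfl h, ← Nat.cast_sum, sum_offdiag_nat]

lemma tsum_diag (v : ℕ → ℝ≥0∞) :
    ∑' p : ℕ × ℕ, (if p.1 = p.2 then v p.1 else 0) = ∑' i : ℕ, v i := by
  rw [ENNReal.tsum_prod (f := fun i j => if i = j then v i else 0)]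
  refine tsum_congr fun i => ?_
  have h : (fun j => if i = j then v i else 0) = fun j => if j = i then v i else 0 :=
    funext fun j => by by_cases h : i = j <;> simp [h, eq_comm]
  calc ∑' j : ℕ, (if i = j then v i else 0) = ∑' j : ℕ, (if j = i then v i else 0) := by rw [h]
    _ = v i := tsum_ite_eq i (fun _ => v i)

lemma pointwise_prod (N : ℕ) (a b : ℕ → ℝ≥0∞) :
    (∑ i ∈ Finset.range N, a i) * (∑ j ∈ Finset.range N, b j)
      = ∑' p : ℕ × ℕ, (if p.1 < N ∧ p.2 < N then (1:ℝ≥0∞) else 0) * (a p.1 * b p.2) := by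
  have h1 : ∑' p : ℕ × ℕ, (if p.1 < N ∧ p.2 < N then (1:ℝ≥0∞) else 0) * (a p.1 * b p.2)
      = ∑ p ∈ (Finset.range N) ×ˢ (Finset.range N),
          (if p.1 < N ∧ p.2 < N then (1:ℝ≥0∞) else 0) * (a p.1 * b p.2) :=
    tsum_eq_sum (fun p hp => by
      simp only [Finset.mem_product, Finset.mem_range] at hp
      rw [if_neg hp, zero_mul])
  have h2 : ∀ p ∈ (Finset.range N) ×ˢ (Finset.range N),
      (if p.1 < N ∧ p.2 < N then (1:ℝ≥0∞) else 0) * (a p.1 * b p.2) = a p.1 * b p.2 :=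
    fun p hp => by
      simp only [Finset.mem_product, Finset.mem_range] at hp
      rw [if_pos hp, one_mul]
  rw [h1, Finset.sum_congr rfl h2, Finset.sum_product, Finset.sum_mul]
  exact Finset.sum_congr rfl fun i _ => by simp [Finset.mul_sum]

lemma sumB {N : Ω → ℕ} (hN : Measurable N) :
    ∑' i : ℕ, ∫⁻ ω, (if i < N ω then (1:ℝ≥0∞) else 0) ∂P = ∫⁻ ω, (N ω : ℝ≥0∞) ∂P := by
  have hmeas : ∀ i : ℕ, Measurable fun ω => (if i < N ω then (1:ℝ≥0∞) else 0) := fun i =>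
    Measurable.ite (msetP hN (fun z => i < z)) measurable_const measurable_const
  rw [← lintegral_tsum (fun i => (hmeas i).aemeasurable)]
  exact lintegral_congr fun ω => tsum_ind_lt (N ω)

lemma sumA {N : Ω → ℕ} (hN : Measurable N) :
    ∑' p : ℕ × ℕ, ∫⁻ ω, (if p.1 ≠ p.2 ∧ p.1 < N ω ∧ p.2 < N ω then (1:ℝ≥0∞) else 0) ∂P
      = ∫⁻ ω, ((N ω * (N ω - 1) : ℕ) : ℝ≥0∞) ∂P := by
  have hmeas : ∀ p : ℕ × ℕ,
      Measurable fun ω => (if p.1 ≠ p.2 ∧ p.1 < N ω ∧ p.2 < N ω then (1:ℝ≥0∞) else 0) := fun p =>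
    Measurable.ite (msetP hN (fun z => p.1 ≠ p.2 ∧ p.1 < z ∧ p.2 < z)) measurable_const
      measurable_const
  rw [← lintegral_tsum (fun p => (hmeas p).aemeasurable)]
  exact lintegral_congr fun ω => tsum_ind_offdiag (N ω)

section Main
variable (hXmeas : ∀ q, Measurable (X q))
  (hindep : iIndepFun X P)
  (hident : ∀ n i, IdentDistrib (X (n, i)) (X (n, 0)) P P)
include hXmeas hindep hident

lemma hid_lemma (m : ℕ) (g : ℕ → ℝ≥0∞) (i : ℕ) :
    ∫⁻ ω, g (X (m, i) ω) ∂P = ∫⁻ ω, g (X (m, 0) ω) ∂P :=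
  ((hident m i).comp (measurable_from_top (f := g))).lintegral_eq

/-- Key single-sum lemma: `E[W · ∑_{i<N} g(X_{m,i})] = E[g(X_{m,0})] · E[W·N]`. -/
lemma key1 {S : Set (ℕ × ℕ)} (m : ℕ) (hS : ∀ i, (m, i) ∉ S)
    (W : Ω → ℝ≥0∞) (hW : Measurable[G X S] W)
    (N : Ω → ℕ) (hN : Measurable[G X S] N) (g : ℕ → ℝ≥0∞) :
    ∫⁻ ω, W ω * ∑ i ∈ Finset.range (N ω), g (X (m, i) ω) ∂P
      = (∫⁻ ω, g (X (m, 0) ω) ∂P) * ∫⁻ ω, W ω * N ω ∂P := by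
  have hWind : ∀ i : ℕ, Measurable[G X S] (fun ω => W ω * if i < N ω then (1:ℝ≥0∞) else 0) :=
    fun i => hW.mul (Measurable.ite (msetP hN (fun z => i < z)) measurable_const measurable_const)
  have hXgm : ∀ i : ℕ, Measurable[G X {(m, i)}] (fun ω => g (X (m, i) ω)) := fun i =>
    measurable_from_top.comp (measurable_X_G rfl)
  have hTm : ∀ i : ℕ,
      Measurable fun ω => (W ω * if i < N ω then (1:ℝ≥0∞) else 0) * g (X (m, i) ω) := fun i =>
    ((hWind i).mono (G_le hXmeas S) le_rfl).mul ((hXgm i).mono (G_le hXmeas _) le_rfl)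
  have hpt : ∀ ω, W ω * ∑ i ∈ Finset.range (N ω), g (X (m, i) ω)
      = ∑' i : ℕ, (W ω * if i < N ω then (1:ℝ≥0∞) else 0) * g (X (m, i) ω) := by
    intro ω
    rw [tsum_eq_sum (s := Finset.range (N ω)) (fun b hb => by
      simp only [Finset.mem_range, not_lt] at hb
      simp [Nat.not_lt.mpr hb])]
    rw [Finset.mul_sum]
    refine Finset.sum_congr rfl fun i hi => ?_
    simp [Finset.mem_range.mp hi]
  simp only [hpt]
  rw [lintegral_tsum (fun i => (hTm i).aemeasurable)]
  have hterm : ∀ i : ℕ, ∫⁻ ω, (W ω * if i < N ω then (1:ℝ≥0∞) else 0) * g (X (m, i) ω) ∂P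
      = (∫⁻ ω, g (X (m, 0) ω) ∂P) * ∫⁻ ω, W ω * if i < N ω then (1:ℝ≥0∞) else 0 ∂P := by
    intro i
    have hdisj : Disjoint S {(m, i)} :=
      Set.disjoint_right.mpr (by rintro q rfl; exact hS i)
    have h1 : ∫⁻ ω, (W ω * if i < N ω then (1:ℝ≥0∞) else 0) * g (X (m, i) ω) ∂P
        = (∫⁻ ω, W ω * if i < N ω then (1:ℝ≥0∞) else 0 ∂P) * ∫⁻ ω, g (X (m, i) ω) ∂P :=
      split hXmeas hindep hdisj (hWind i) (hXgm i)
    rw [h1, hid_lemma hXmeas hindep hident m g i]; ring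
  simp only [hterm]
  rw [ENNReal.tsum_mul_left, ← lintegral_tsum (fun i =>
    ((hWind i).mono (G_le hXmeas S) le_rfl).aemeasurable)]
  congr 1
  refine lintegral_congr fun ω => ?_
  rw [ENNReal.tsum_mul_left, tsum_ind_lt]
lemma term_diag {S : Set (ℕ × ℕ)} (m : ℕ) (hS : ∀ i, (m, i) ∉ S)
    {N : Ω → ℕ} (hN : Measurable[G X S] N) (g h : ℕ → ℝ≥0∞) (i : ℕ) :
    ∫⁻ ω, (if i < N ω then (1:ℝ≥0∞) else 0) * (g (X (m, i) ω) * h (X (m, i) ω)) ∂P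
      = (∫⁻ ω, g (X (m, 0) ω) * h (X (m, 0) ω) ∂P) *
          ∫⁻ ω, (if i < N ω then (1:ℝ≥0∞) else 0) ∂P := by
  have hind : Measurable[G X S] (fun ω => if i < N ω then (1:ℝ≥0∞) else 0) :=
    Measurable.ite (msetP hN (fun z => i < z)) measurable_const measurable_const
  have hXg1 : Measurable[G X {(m, i)}] (fun ω => g (X (m, i) ω)) :=
    measurable_from_top.comp (measurable_X_G rfl)
  have hXh1 : Measurable[G X {(m, i)}] (fun ω => h (X (m, i) ω)) :=
    measurable_from_top.comp (measurable_X_G rfl)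
  have hXgh : Measurable[G X {(m, i)}] (fun ω => g (X (m, i) ω) * h (X (m, i) ω)) :=
    hXg1.mul hXh1
  have hdisj : Disjoint S {(m, i)} :=
    Set.disjoint_right.mpr (by rintro q rfl; exact hS i)
  have h1 : ∫⁻ ω, (if i < N ω then (1:ℝ≥0∞) else 0) * (g (X (m, i) ω) * h (X (m, i) ω)) ∂P
      = (∫⁻ ω, (if i < N ω then (1:ℝ≥0∞) else 0) ∂P) *
          ∫⁻ ω, g (X (m, i) ω) * h (X (m, i) ω) ∂P :=
    split hXmeas hindep hdisj hind hXgh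
  rw [h1, hid_lemma hXmeas hindep hident m (fun x => g x * h x) i]
  ring

lemma term_offdiag {S : Set (ℕ × ℕ)} (m : ℕ) (hS : ∀ i, (m, i) ∉ S)
    {N : Ω → ℕ} (hN : Measurable[G X S] N) (g h : ℕ → ℝ≥0∞) {i j : ℕ} (hij : i ≠ j) :
    ∫⁻ ω, (if i < N ω ∧ j < N ω then (1:ℝ≥0∞) else 0) * (g (X (m, i) ω) * h (X (m, j) ω)) ∂P
      = (∫⁻ ω, g (X (m, 0) ω) ∂P) * (∫⁻ ω, h (X (m, 0) ω) ∂P) *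
          ∫⁻ ω, (if i < N ω ∧ j < N ω then (1:ℝ≥0∞) else 0) ∂P := by
  have hind : Measurable[G X S] (fun ω => if i < N ω ∧ j < N ω then (1:ℝ≥0∞) else 0) :=
    Measurable.ite (msetP hN (fun z => i < z ∧ j < z)) measurable_const measurable_const
  have hXg1 : Measurable[G X {(m, i)}] (fun ω => g (X (m, i) ω)) :=
    measurable_from_top.comp (measurable_X_G rfl)
  have hXh1 : Measurable[G X {(m, j)}] (fun ω => h (X (m, j) ω)) :=
    measurable_from_top.comp (measurable_X_G rfl)
  have hsub : ({(m, i)} : Set (ℕ × ℕ)) ⊆ insert (m, i) S :=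
    Set.singleton_subset_iff.mpr (Set.mem_insert _ _)
  have hmf : Measurable[G X (insert (m, i) S)]
      (fun ω => (if i < N ω ∧ j < N ω then (1:ℝ≥0∞) else 0) * g (X (m, i) ω)) :=
    (hind.mono (G_mono (Set.subset_insert _ _)) le_rfl).mul
      (hXg1.mono (G_mono hsub) le_rfl)
  have hdisj1 : Disjoint (insert (m, i) S) {(m, j)} :=
    Set.disjoint_right.mpr (by
      rintro q rfl
      simp only [Set.mem_insert_iff, not_or]
      exact ⟨by simp [Prod.ext_iff, Ne.symm hij], hS j⟩)
  have hdisj2 : Disjoint S {(m, i)} :=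
    Set.disjoint_right.mpr (by rintro q rfl; exact hS i)
  have e1 : ∀ ω, (if i < N ω ∧ j < N ω then (1:ℝ≥0∞) else 0) *
      (g (X (m, i) ω) * h (X (m, j) ω))
      = ((if i < N ω ∧ j < N ω then (1:ℝ≥0∞) else 0) * g (X (m, i) ω)) * h (X (m, j) ω) := by
    intro ω; ring
  have h1 : ∫⁻ ω, ((if i < N ω ∧ j < N ω then (1:ℝ≥0∞) else 0) * g (X (m, i) ω)) *
        h (X (m, j) ω) ∂P
      = (∫⁻ ω, (if i < N ω ∧ j < N ω then (1:ℝ≥0∞) else 0) * g (X (m, i) ω) ∂P) *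
          ∫⁻ ω, h (X (m, j) ω) ∂P :=
    split hXmeas hindep hdisj1 hmf hXh1
  have h2 : ∫⁻ ω, (if i < N ω ∧ j < N ω then (1:ℝ≥0∞) else 0) * g (X (m, i) ω) ∂P
      = (∫⁻ ω, (if i < N ω ∧ j < N ω then (1:ℝ≥0∞) else 0) ∂P) * ∫⁻ ω, g (X (m, i) ω) ∂P :=
    split hXmeas hindep hdisj2 hind hXg1
  simp only [e1]
  rw [h1, h2, hid_lemma hXmeas hindep hident m g i, hid_lemma hXmeas hindep hident m h j]
  ring

/-- Key double-sum lemma. -/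
lemma key2 {S : Set (ℕ × ℕ)} (m : ℕ) (hS : ∀ i, (m, i) ∉ S)
    {N : Ω → ℕ} (hN : Measurable[G X S] N) (g h : ℕ → ℝ≥0∞) :
    ∫⁻ ω, (∑ i ∈ Finset.range (N ω), g (X (m, i) ω)) *
        (∑ j ∈ Finset.range (N ω), h (X (m, j) ω)) ∂P
      = (∫⁻ ω, g (X (m, 0) ω) ∂P) * (∫⁻ ω, h (X (m, 0) ω) ∂P) *
          (∫⁻ ω, ((N ω * (N ω - 1) : ℕ) : ℝ≥0∞) ∂P)
        + (∫⁻ ω, g (X (m, 0) ω) * h (X (m, 0) ω) ∂P) * ∫⁻ ω, (N ω : ℝ≥0∞) ∂P := by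
  have hNa : Measurable N := hN.mono (G_le hXmeas S) le_rfl
  have hXgp : ∀ p : ℕ × ℕ, Measurable (fun ω => g (X (m, p.1) ω)) := fun p =>
    measurable_from_top.comp (hXmeas (m, p.1))
  have hXhp : ∀ p : ℕ × ℕ, Measurable (fun ω => h (X (m, p.2) ω)) := fun p =>
    measurable_from_top.comp (hXmeas (m, p.2))
  have hTmeas : ∀ p : ℕ × ℕ, Measurable (fun ω =>
      (if p.1 < N ω ∧ p.2 < N ω then (1:ℝ≥0∞) else 0) *
        (g (X (m, p.1) ω) * h (X (m, p.2) ω))) := fun p =>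
    (Measurable.ite (msetP hNa (fun z => p.1 < z ∧ p.2 < z)) measurable_const
        measurable_const).mul ((hXgp p).mul (hXhp p))
  have hpt : ∀ ω, (∑ i ∈ Finset.range (N ω), g (X (m, i) ω)) *
      (∑ j ∈ Finset.range (N ω), h (X (m, j) ω))
      = ∑' p : ℕ × ℕ, (if p.1 < N ω ∧ p.2 < N ω then (1:ℝ≥0∞) else 0) *
          (g (X (m, p.1) ω) * h (X (m, p.2) ω)) := fun ω =>
    pointwise_prod (N ω) (fun i => g (X (m, i) ω)) (fun j => h (X (m, j) ω))
  simp only [hpt]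
  rw [lintegral_tsum (fun p => (hTmeas p).aemeasurable)]
  have hterm : ∀ p : ℕ × ℕ, ∫⁻ ω, (if p.1 < N ω ∧ p.2 < N ω then (1:ℝ≥0∞) else 0) *
      (g (X (m, p.1) ω) * h (X (m, p.2) ω)) ∂P
      = (∫⁻ ω, g (X (m, 0) ω) ∂P) * (∫⁻ ω, h (X (m, 0) ω) ∂P) *
          (∫⁻ ω, (if p.1 ≠ p.2 ∧ p.1 < N ω ∧ p.2 < N ω then (1:ℝ≥0∞) else 0) ∂P)
        + (∫⁻ ω, g (X (m, 0) ω) * h (X (m, 0) ω) ∂P) *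
          (if p.1 = p.2 then ∫⁻ ω, (if p.1 < N ω then (1:ℝ≥0∞) else 0) ∂P else 0) := by
    intro p
    by_cases hd : p.1 = p.2
    · rw [if_pos hd]
      have e1 : ∀ ω, (if p.1 ≠ p.2 ∧ p.1 < N ω ∧ p.2 < N ω then (1:ℝ≥0∞) else 0) = 0 := by
        intro ω; simp [hd]
      have e3 : ∀ ω, (if p.1 < N ω ∧ p.2 < N ω then (1:ℝ≥0∞) else 0) *
          (g (X (m, p.1) ω) * h (X (m, p.2) ω))
          = (if p.1 < N ω then (1:ℝ≥0∞) else 0) * (g (X (m, p.1) ω) * h (X (m, p.1) ω)) := by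
        intro ω
        have e2 : (if p.1 < N ω ∧ p.2 < N ω then (1:ℝ≥0∞) else 0)
            = (if p.1 < N ω then (1:ℝ≥0∞) else 0) := by
          rw [← hd]; by_cases hlt : p.1 < N ω <;> simp [hlt]
        rw [e2, ← hd]
      simp only [e1, e3, lintegral_zero, mul_zero, zero_add]
      exact term_diag hXmeas hindep hident m hS hN g h p.1
    · rw [if_neg hd]
      have e1 : ∀ ω, (if p.1 ≠ p.2 ∧ p.1 < N ω ∧ p.2 < N ω then (1:ℝ≥0∞) else 0)
          = (if p.1 < N ω ∧ p.2 < N ω then (1:ℝ≥0∞) else 0) := by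
        intro ω; by_cases hlt : p.1 < N ω ∧ p.2 < N ω <;> simp [hlt, hd]
      simp only [e1, mul_zero, add_zero]
      exact term_offdiag hXmeas hindep hident m hS hN g h hd
  simp only [hterm]
  rw [ENNReal.tsum_add, ENNReal.tsum_mul_left, ENNReal.tsum_mul_left]
  rw [sumA hNa, tsum_diag (v := fun i => ∫⁻ ω, (if i < N ω then (1:ℝ≥0∞) else 0) ∂P), sumB hNa]

end Main

section Tree

/-- indices of generations below `m` -/
def Lt (m : ℕ) : Set (ℕ × ℕ) := {q | q.1 < m}

lemma not_mem_Lt (m i : ℕ) : (m, i) ∉ Lt m := lt_irrefl m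

lemma Lt_mono {a b : ℕ} (h : a ≤ b) : Lt a ⊆ Lt b := fun _ hq => lt_of_lt_of_le hq h

lemma measurable_sum_u (u : ℕ → ℕ) (m : ℕ) {N : Ω → ℕ} (hN : Measurable[G X (Lt m)] N) :
    Measurable[G X (Lt (m+1))] (fun ω => ∑ i ∈ Finset.range (N ω), u (X (m, i) ω)) := by
  have hNm : Measurable[G X (Lt (m+1))] N := hN.mono (G_mono (Lt_mono (Nat.le_succ m))) le_rfl
  have hsum : ∀ r : ℕ,
      Measurable[G X (Lt (m+1))] (fun ω => ∑ i ∈ Finset.range r, u (X (m, i) ω)) := by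
    intro r
    refine Finset.measurable_sum _ (fun i _ => ?_)
    exact measurable_from_top.comp
      (measurable_X_G (show (m, i) ∈ Lt (m+1) from Nat.lt_succ_self m))
  refine @measurable_to_countable' ℕ Ω _ _ (G X (Lt (m+1))) _ (fun c => ?_)
  have he : (fun ω => ∑ i ∈ Finset.range (N ω), u (X (m, i) ω)) ⁻¹' {c}
      = ⋃ r : ℕ, ({ω | N ω = r} ∩ {ω | (∑ i ∈ Finset.range r, u (X (m, i) ω)) = c}) := by
    ext ω
    simp only [Set.mem_preimage, Set.mem_singleton_iff, Set.mem_iUnion, Set.mem_inter_iff,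
      Set.mem_setOf_eq]
    constructor
    · intro h; exact ⟨N ω, rfl, h⟩
    · rintro ⟨r, hr, h⟩; rw [hr]; exact h
  rw [he]
  exact MeasurableSet.iUnion fun r =>
    (msetP hNm (fun z => z = r)).inter (msetP (hsum r) (fun z => z = c))

variable {Z Zt : ℕ → Ω → ℕ}

lemma measurable_Z_G (hZ0 : ∀ ω, Z 0 ω = 1)
    (hZ : ∀ n ω, Z (n + 1) ω = ∑ i ∈ Finset.range (Z n ω), X (n, i) ω) :
    ∀ m, Measurable[G X (Lt m)] (Z m) := by
  intro m; induction m with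
  | zero =>
      have h0 : Z 0 = fun _ => 1 := funext hZ0
      rw [h0]; exact measurable_const
  | succ m ih =>
      have he : Z (m+1) = fun ω => ∑ i ∈ Finset.range (Z m ω), (fun x => x) (X (m, i) ω) :=
        funext fun ω => by simpa using hZ m ω
      rw [he]; exact measurable_sum_u (fun x => x) m ih

lemma measurable_Zt_G (hZ0 : ∀ ω, Z 0 ω = 1)
    (hZ : ∀ n ω, Z (n + 1) ω = ∑ i ∈ Finset.range (Z n ω), X (n, i) ω)
    (hZt : ∀ n ω, Zt n ω = ∑ i ∈ Finset.range (Z n ω), if X (n, i) ω = 0 then 1 else 0)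
    (m : ℕ) : Measurable[G X (Lt (m+1))] (Zt m) := by
  have he : Zt m = fun ω => ∑ i ∈ Finset.range (Z m ω),
      (fun x => if x = 0 then 1 else 0) (X (m, i) ω) :=
    funext fun ω => by simpa using hZt m ω
  rw [he]; exact measurable_sum_u (fun x => if x = 0 then 1 else 0) m (measurable_Z_G hZ0 hZ m)

lemma castZt (hZt : ∀ n ω, Zt n ω = ∑ i ∈ Finset.range (Z n ω), if X (n, i) ω = 0 then 1 else 0)
    (m : ℕ) (ω : Ω) : ((Zt m ω : ℕ) : ℝ≥0∞)
      = ∑ i ∈ Finset.range (Z m ω), (if X (m, i) ω = 0 then (1:ℝ≥0∞) else 0) := by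
  rw [hZt m ω]; push_cast
  exact Finset.sum_congr rfl fun i _ => by by_cases h : X (m, i) ω = 0 <;> simp [h]

lemma castZ (hZ : ∀ n ω, Z (n + 1) ω = ∑ i ∈ Finset.range (Z n ω), X (n, i) ω)
    (m : ℕ) (ω : Ω) : ((Z (m+1) ω : ℕ) : ℝ≥0∞)
      = ∑ i ∈ Finset.range (Z m ω), ((X (m, i) ω : ℕ) : ℝ≥0∞) := by
  rw [hZ m ω]; push_cast; rfl

end Tree


section Conv

lemma integral_nat_eq {F : Ω → ℕ} (hF : Measurable F) :
    ∫ ω, (F ω : ℝ) ∂P = (∫⁻ ω, (F ω : ℝ≥0∞) ∂P).toReal := by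
  have hsm : AEStronglyMeasurable (fun ω => (F ω : ℝ)) P :=
    ((measurable_from_top (f := fun z : ℕ => (z : ℝ))).comp hF).aestronglyMeasurable
  rw [integral_eq_lintegral_of_nonneg_ae (Filter.Eventually.of_forall fun ω => by positivity) hsm]
  congr 1
  refine lintegral_congr fun ω => ?_
  rw [ENNReal.ofReal_natCast]

lemma integrable_nat {F : Ω → ℕ} (hF : Measurable F)
    (hfin : ∫⁻ ω, (F ω : ℝ≥0∞) ∂P ≠ ∞) :
    Integrable (fun ω => (F ω : ℝ)) P := by
  have h := integrable_toReal_of_lintegral_ne_top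
    (f := fun ω => ((F ω : ℕ) : ℝ≥0∞)) (measurable_from_top.comp hF).aemeasurable hfin
  have he : (fun ω => (((F ω : ℕ) : ℝ≥0∞)).toReal) = fun ω => (F ω : ℝ) :=
    funext fun ω => by simp
  rwa [he] at h

lemma cov_eq' {f g : Ω → ℝ} (hf : Integrable f P) (hg : Integrable g P)
    (hfg : Integrable (fun ω => f ω * g ω) P) :
    (∫ ω, (f ω - ∫ ω', f ω' ∂P) * (g ω - ∫ ω', g ω' ∂P) ∂P)
      = ∫ ω, f ω * g ω ∂P - (∫ ω, f ω ∂P) * ∫ ω, g ω ∂P := by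
  set a := ∫ ω', f ω' ∂P with ha
  set b := ∫ ω', g ω' ∂P with hb
  have hpt : ∀ ω, (f ω - a) * (g ω - b) = f ω * g ω - (a * g ω + b * f ω - a * b) := by
    intro ω; ring
  simp_rw [hpt]
  have hga : Integrable (fun ω => a * g ω) P := hg.const_mul a
  have hfb : Integrable (fun ω => b * f ω) P := hf.const_mul b
  have hadd : Integrable (fun ω => a * g ω + b * f ω) P := hga.add hfb
  have hint : Integrable (fun ω => a * g ω + b * f ω - a * b) P :=
    hadd.sub (integrable_const (a * b))
  rw [integral_sub hfg hint, integral_sub hadd (integrable_const (a * b)),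
    integral_add hga hfb, integral_const_mul, integral_const_mul, integral_const]
  simp only [measure_univ, probReal_univ, ENNReal.toReal_one, smul_eq_mul, one_mul, ← ha, ← hb]
  ring

end Conv

end IgwtAux

namespace IgwtAux

/-- indicator of 0 -/
noncomputable def ind0 : ℕ → ℝ≥0∞ := fun x => if x = 0 then 1 else 0

/-- cast -/
noncomputable def cst : ℕ → ℝ≥0∞ := fun x => (x : ℝ≥0∞)

lemma cast_le_sq (x : ℕ) : (x : ℝ≥0∞) ≤ (x : ℝ≥0∞) * x := by
  cases x with
  | zero => simp
  | succ y =>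
      have h1 : (1 : ℝ≥0∞) ≤ ((y+1 : ℕ) : ℝ≥0∞) := by exact_mod_cast Nat.succ_le_succ (Nat.zero_le y)
      calc ((y+1 : ℕ) : ℝ≥0∞) = ((y+1 : ℕ) : ℝ≥0∞) * 1 := (mul_one _).symm
        _ ≤ _ := mul_le_mul_right h1 _

lemma cast_pred_le (z : ℕ) : ((z * (z - 1) : ℕ) : ℝ≥0∞) ≤ (z : ℝ≥0∞) * z := by
  have h : z * (z - 1) ≤ z * z := Nat.mul_le_mul_left z (Nat.sub_le z 1)
  calc ((z * (z - 1) : ℕ) : ℝ≥0∞) ≤ ((z * z : ℕ) : ℝ≥0∞) := by exact_mod_cast h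
    _ = (z : ℝ≥0∞) * z := by push_cast; rfl

lemma cast_pred_real (z : ℕ) : ((z * (z - 1) : ℕ) : ℝ) = (z : ℝ)^2 - z := by
  cases z with
  | zero => simp
  | succ y => push_cast [Nat.succ_sub_one]; ring

end IgwtAux

open IgwtAux

set_option maxHeartbeats 2000000 in
/-- For an IGWT and `k > 0`,
`Cov(Z̃_n, Z̃_{n+k}) = p_{n+k} p_n m_{n+k} (s_n²/m_n - 1)`. -/
theorem igwt_leaves_cov
    {Ω : Type*} [MeasurableSpace Ω] (P : Measure Ω) [IsProbabilityMeasure P]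
    (X : ℕ × ℕ → Ω → ℕ) (Z Zt : ℕ → Ω → ℕ) (p : ℕ → ℝ)
    (hXmeas : ∀ q, Measurable (X q))
    (hindep : iIndepFun X P)
    (hident : ∀ n i, IdentDistrib (X (n, i)) (X (n, 0)) P P)
    (hL2 : ∀ n i, MemLp (fun ω => (X (n, i) ω : ℝ)) 2 P)
    (hp : ∀ n, (P {ω | X (n, 0) ω = 0}).toReal = p n)
    (hZ0 : ∀ ω, Z 0 ω = 1)
    (hZ : ∀ n ω, Z (n + 1) ω = ∑ i ∈ Finset.range (Z n ω), X (n, i) ω)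
    (hZt : ∀ n ω, Zt n ω = ∑ i ∈ Finset.range (Z n ω), if X (n, i) ω = 0 then 1 else 0)
    (n k : ℕ) (hk : 0 < k)
    (hm : 0 < ∫ ω, (Z n ω : ℝ) ∂P) :
    cov P (fun ω => (Zt n ω : ℝ)) (fun ω => (Zt (n + k) ω : ℝ)) =
      p (n + k) * p n * (∫ ω, (Z (n + k) ω : ℝ) ∂P) *
        (variance (fun ω => (Z n ω : ℝ)) P / (∫ ω, (Z n ω : ℝ) ∂P) - 1) := by
  classical
  -- measurability
  have hZGm : ∀ m, Measurable[G X (Lt m)] (Z m) := measurable_Z_G hZ0 hZ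
  have hZa : ∀ m, Measurable (Z m) := fun m => (hZGm m).mono (G_le hXmeas _) le_rfl
  have hZtG : ∀ m, Measurable[G X (Lt (m+1))] (Zt m) := measurable_Zt_G hZ0 hZ hZt
  have hZta : ∀ m, Measurable (Zt m) := fun m => (hZtG m).mono (G_le hXmeas _) le_rfl
  -- ENNReal abbreviations
  set μe : ℕ → ℝ≥0∞ := fun m => ∫⁻ ω, cst (X (m, 0) ω) ∂P with hμe_def
  set pe : ℕ → ℝ≥0∞ := fun m => ∫⁻ ω, ind0 (X (m, 0) ω) ∂P with hpe_def
  set me : ℕ → ℝ≥0∞ := fun j => ∫⁻ ω, ((Z j ω : ℕ) : ℝ≥0∞) ∂P with hme_def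
  set sqe : ℕ → ℝ≥0∞ := fun j => ∫⁻ ω, ((Z j ω : ℕ) : ℝ≥0∞) * ((Z j ω : ℕ) : ℝ≥0∞) ∂P
    with hsqe_def
  set qe : ℝ≥0∞ := ∫⁻ ω, ((Z n ω * (Z n ω - 1) : ℕ) : ℝ≥0∞) ∂P with hqe_def
  -- (1) E[Zt m] = pe m * me m
  have hEZt : ∀ m, ∫⁻ ω, ((Zt m ω : ℕ) : ℝ≥0∞) ∂P = pe m * me m := by
    intro m
    calc ∫⁻ ω, ((Zt m ω : ℕ) : ℝ≥0∞) ∂P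
        = ∫⁻ ω, (fun _ : Ω => (1:ℝ≥0∞)) ω * ∑ i ∈ Finset.range (Z m ω), ind0 (X (m, i) ω) ∂P := by
          refine lintegral_congr fun ω => ?_
          rw [castZt hZt m ω]; simp [ind0]
      _ = (∫⁻ ω, ind0 (X (m, 0) ω) ∂P) * ∫⁻ ω, (fun _ : Ω => (1:ℝ≥0∞)) ω * ((Z m ω : ℕ) : ℝ≥0∞) ∂P :=
          key1 hXmeas hindep hident m (not_mem_Lt m) (fun _ => 1) measurable_const
            (Z m) (hZGm m) ind0
      _ = pe m * me m := by
          rw [hpe_def, hme_def]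
          congr 1
          exact lintegral_congr fun ω => one_mul _
  -- (2) me (m+1) = μe m * me m
  have hmeS : ∀ m, me (m+1) = μe m * me m := by
    intro m
    calc me (m+1)
        = ∫⁻ ω, (fun _ : Ω => (1:ℝ≥0∞)) ω * ∑ i ∈ Finset.range (Z m ω), cst (X (m, i) ω) ∂P := by
          refine lintegral_congr fun ω => ?_
          rw [castZ hZ m ω]; simp [cst]
      _ = (∫⁻ ω, cst (X (m, 0) ω) ∂P) * ∫⁻ ω, (fun _ : Ω => (1:ℝ≥0∞)) ω * ((Z m ω : ℕ) : ℝ≥0∞) ∂P :=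
          key1 hXmeas hindep hident m (not_mem_Lt m) (fun _ => 1) measurable_const
            (Z m) (hZGm m) cst
      _ = μe m * me m := by
          rw [hμe_def, hme_def]
          congr 1
          exact lintegral_congr fun ω => one_mul _
  -- measurable casts of Zt n w.r.t. G X (Lt m) for n+1 ≤ m
  have hWm : ∀ m, n + 1 ≤ m → Measurable[G X (Lt m)] (fun ω => ((Zt n ω : ℕ) : ℝ≥0∞)) := by
    intro m hm'
    exact measurable_from_top.comp ((hZtG n).mono (G_mono (Lt_mono hm')) le_rfl)
  -- (3) step
  have hstep : ∀ m, n + 1 ≤ m →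
      ∫⁻ ω, ((Zt n ω : ℕ) : ℝ≥0∞) * ((Z (m+1) ω : ℕ) : ℝ≥0∞) ∂P
        = μe m * ∫⁻ ω, ((Zt n ω : ℕ) : ℝ≥0∞) * ((Z m ω : ℕ) : ℝ≥0∞) ∂P := by
    intro m hm'
    calc ∫⁻ ω, ((Zt n ω : ℕ) : ℝ≥0∞) * ((Z (m+1) ω : ℕ) : ℝ≥0∞) ∂P
        = ∫⁻ ω, ((Zt n ω : ℕ) : ℝ≥0∞) * ∑ i ∈ Finset.range (Z m ω), cst (X (m, i) ω) ∂P := by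
          refine lintegral_congr fun ω => ?_
          rw [castZ hZ m ω]; simp [cst]
      _ = (∫⁻ ω, cst (X (m, 0) ω) ∂P) *
            ∫⁻ ω, ((Zt n ω : ℕ) : ℝ≥0∞) * ((Z m ω : ℕ) : ℝ≥0∞) ∂P :=
          key1 hXmeas hindep hident m (not_mem_Lt m) _ (hWm m hm') (Z m) (hZGm m) cst
  -- (4) top
  have htop : ∫⁻ ω, ((Zt n ω : ℕ) : ℝ≥0∞) * ((Zt (n+k) ω : ℕ) : ℝ≥0∞) ∂P
      = pe (n+k) * ∫⁻ ω, ((Zt n ω : ℕ) : ℝ≥0∞) * ((Z (n+k) ω : ℕ) : ℝ≥0∞) ∂P := by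
    calc ∫⁻ ω, ((Zt n ω : ℕ) : ℝ≥0∞) * ((Zt (n+k) ω : ℕ) : ℝ≥0∞) ∂P
        = ∫⁻ ω, ((Zt n ω : ℕ) : ℝ≥0∞) * ∑ i ∈ Finset.range (Z (n+k) ω), ind0 (X (n+k, i) ω) ∂P := by
          refine lintegral_congr fun ω => ?_
          rw [castZt hZt (n+k) ω]; simp [ind0]
      _ = (∫⁻ ω, ind0 (X (n+k, 0) ω) ∂P) *
            ∫⁻ ω, ((Zt n ω : ℕ) : ℝ≥0∞) * ((Z (n+k) ω : ℕ) : ℝ≥0∞) ∂P :=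
          key1 hXmeas hindep hident (n+k) (not_mem_Lt (n+k)) _
            (hWm (n+k) (by omega)) (Z (n+k)) (hZGm (n+k)) ind0
  -- (5) base
  have hbase : ∫⁻ ω, ((Zt n ω : ℕ) : ℝ≥0∞) * ((Z (n+1) ω : ℕ) : ℝ≥0∞) ∂P
      = pe n * μe n * qe := by
    have h0 : ∀ x : ℕ, ind0 x * cst x = 0 := by
      intro x; by_cases h : x = 0 <;> simp [ind0, cst, h]
    calc ∫⁻ ω, ((Zt n ω : ℕ) : ℝ≥0∞) * ((Z (n+1) ω : ℕ) : ℝ≥0∞) ∂P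
        = ∫⁻ ω, (∑ i ∈ Finset.range (Z n ω), ind0 (X (n, i) ω)) *
            (∑ j ∈ Finset.range (Z n ω), cst (X (n, j) ω)) ∂P := by
          refine lintegral_congr fun ω => ?_
          rw [castZt hZt n ω, castZ hZ n ω]; simp [ind0, cst]
      _ = (∫⁻ ω, ind0 (X (n, 0) ω) ∂P) * (∫⁻ ω, cst (X (n, 0) ω) ∂P) *
            (∫⁻ ω, ((Z n ω * (Z n ω - 1) : ℕ) : ℝ≥0∞) ∂P)
          + (∫⁻ ω, ind0 (X (n, 0) ω) * cst (X (n, 0) ω) ∂P) * ∫⁻ ω, ((Z n ω : ℕ) : ℝ≥0∞) ∂P :=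
          key2 hXmeas hindep hident n (not_mem_Lt n) (hZGm n) ind0 cst
      _ = pe n * μe n * qe := by
          simp only [h0, lintegral_zero, zero_mul, add_zero]; rfl
  -- (6) second moments are finite
  have hsXfin : ∀ m, ∫⁻ ω, cst (X (m, 0) ω) * cst (X (m, 0) ω) ∂P < ⊤ := by
    intro m
    have h2 : Integrable (fun ω => (X (m, 0) ω : ℝ)^2) P := (hL2 m 0).integrable_sq
    have h3 := h2.lintegral_lt_top
    refine lt_of_le_of_lt (le_of_eq ?_) h3
    refine lintegral_congr fun ω => ?_
    rw [pow_two, ENNReal.ofReal_mul (by positivity), ENNReal.ofReal_natCast]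
    rfl
  have hμfin : ∀ m, μe m < ⊤ := fun m =>
    lt_of_le_of_lt (lintegral_mono fun ω => cast_le_sq _) (hsXfin m)
  have hsqefin : ∀ m, sqe m < ⊤ := by
    intro m
    induction m with
    | zero =>
        have : sqe 0 = 1 := by
          rw [hsqe_def]
          calc ∫⁻ ω, ((Z 0 ω : ℕ) : ℝ≥0∞) * ((Z 0 ω : ℕ) : ℝ≥0∞) ∂P
              = ∫⁻ _, (1:ℝ≥0∞) ∂P := lintegral_congr fun ω => by simp [hZ0 ω]
            _ = 1 := by simp
        rw [this]; exact ENNReal.one_lt_top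
    | succ m ih =>
        have hkey : sqe (m+1) = μe m * μe m * (∫⁻ ω, ((Z m ω * (Z m ω - 1) : ℕ) : ℝ≥0∞) ∂P)
            + (∫⁻ ω, cst (X (m, 0) ω) * cst (X (m, 0) ω) ∂P) * me m := by
          calc sqe (m+1)
              = ∫⁻ ω, (∑ i ∈ Finset.range (Z m ω), cst (X (m, i) ω)) *
                  (∑ j ∈ Finset.range (Z m ω), cst (X (m, j) ω)) ∂P := by
                refine lintegral_congr fun ω => ?_
                rw [castZ hZ m ω]; simp [cst]
            _ = _ := key2 hXmeas hindep hident m (not_mem_Lt m) (hZGm m) cst cst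
        rw [hkey]
        have h1 : (∫⁻ ω, ((Z m ω * (Z m ω - 1) : ℕ) : ℝ≥0∞) ∂P) ≤ sqe m :=
          lintegral_mono fun ω => cast_pred_le _
        have h2 : me m ≤ sqe m := lintegral_mono fun ω => cast_le_sq _
        exact ENNReal.add_lt_top.mpr
          ⟨ENNReal.mul_lt_top (ENNReal.mul_lt_top (hμfin m) (hμfin m))
              (lt_of_le_of_lt h1 ih),
            ENNReal.mul_lt_top (hsXfin m) (lt_of_le_of_lt h2 ih)⟩
  have hmefin : ∀ m, me m < ⊤ := fun m =>
    lt_of_le_of_lt (lintegral_mono fun ω => cast_le_sq _) (hsqefin m)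
  have hqefin : qe < ⊤ := lt_of_le_of_lt (lintegral_mono fun ω => cast_pred_le _) (hsqefin n)
  -- (7) pe m = P {X = 0}
  have hpeP : ∀ m, pe m = P {ω | X (m, 0) ω = 0} := by
    intro m
    rw [hpe_def]
    calc ∫⁻ ω, ind0 (X (m, 0) ω) ∂P
        = ∫⁻ ω, Set.indicator {ω | X (m, 0) ω = 0} (fun _ => (1:ℝ≥0∞)) ω ∂P := by
          refine lintegral_congr fun ω => ?_
          rw [Set.indicator_apply]
          by_cases h : X (m, 0) ω = 0 <;> simp [ind0, h, Set.mem_setOf_eq]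
      _ = P {ω | X (m, 0) ω = 0} := by
          rw [lintegral_indicator_const (msetP (hXmeas (m,0)) (fun z => z = 0)), one_mul]
  have hpefin : ∀ m, pe m < ⊤ := fun m => by rw [hpeP m]; exact measure_lt_top P _
  -- (8) chains
  have hZtZ : ∀ j, ∫⁻ ω, ((Zt n ω : ℕ) : ℝ≥0∞) * ((Z (n+1+j) ω : ℕ) : ℝ≥0∞) ∂P
      = (∏ i ∈ Finset.range j, μe (n+1+i)) * (pe n * μe n * qe) := by
    intro j
    induction j with
    | zero => simpa using hbase
    | succ j ih =>
        have he : n+1+(j+1) = (n+1+j)+1 := rfl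
        rw [he, hstep (n+1+j) (by omega), ih, Finset.prod_range_succ]
        ring
  have hmeK : ∀ j, me (n+1+j) = (∏ i ∈ Finset.range j, μe (n+1+i)) * (μe n * me n) := by
    intro j
    induction j with
    | zero => simpa using hmeS n
    | succ j ih =>
        have he : n+1+(j+1) = (n+1+j)+1 := rfl
        rw [he, hmeS (n+1+j), ih, Finset.prod_range_succ]
        ring
  have hnk : n + 1 + (k - 1) = n + k := by omega
  have hEprod : ∫⁻ ω, ((Zt n ω : ℕ) : ℝ≥0∞) * ((Zt (n+k) ω : ℕ) : ℝ≥0∞) ∂P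
      = pe (n+k) * ((∏ i ∈ Finset.range (k-1), μe (n+1+i)) * (pe n * μe n * qe)) := by
    rw [htop, ← hnk, hZtZ (k-1)]
  have hmenk : me (n+k) = (∏ i ∈ Finset.range (k-1), μe (n+1+i)) * (μe n * me n) := by
    rw [← hnk, hmeK (k-1)]
  have hPfin : (∏ i ∈ Finset.range (k-1), μe (n+1+i)) < ⊤ :=
    ENNReal.prod_lt_top fun i _ => hμfin (n+1+i)
  -- (9) real conversions
  have hZreal : ∀ m, ∫ ω, (Z m ω : ℝ) ∂P = (me m).toReal := fun m => integral_nat_eq (hZa m)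
  have hZtreal : ∀ m, ∫ ω, (Zt m ω : ℝ) ∂P = (∫⁻ ω, ((Zt m ω : ℕ) : ℝ≥0∞) ∂P).toReal :=
    fun m => integral_nat_eq (hZta m)
  have hZtfin : ∀ m, ∫⁻ ω, ((Zt m ω : ℕ) : ℝ≥0∞) ∂P < ⊤ := by
    intro m
    refine lt_of_le_of_lt (lintegral_mono fun ω => ?_) (hmefin m)
    have : Zt m ω ≤ Z m ω := by
      rw [hZt m ω]
      calc (∑ i ∈ Finset.range (Z m ω), if X (m, i) ω = 0 then 1 else 0)
          ≤ ∑ i ∈ Finset.range (Z m ω), 1 :=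
            Finset.sum_le_sum fun i _ => by split <;> simp
        _ = Z m ω := by simp
    exact (Nat.cast_le (α := ℝ≥0∞)).mpr this
  have hintZ : ∀ m, Integrable (fun ω => (Z m ω : ℝ)) P := fun m =>
    integrable_nat (hZa m) (hmefin m).ne
  have hintZt : ∀ m, Integrable (fun ω => (Zt m ω : ℝ)) P := fun m =>
    integrable_nat (hZta m) (hZtfin m).ne
  -- integrability of the product
  have hprod_cast : ∀ ω, ((Zt n ω * Zt (n+k) ω : ℕ) : ℝ≥0∞)
      = ((Zt n ω : ℕ) : ℝ≥0∞) * ((Zt (n+k) ω : ℕ) : ℝ≥0∞) := fun ω => by push_cast; rfl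
  have hprodfin : ∫⁻ ω, ((Zt n ω * Zt (n+k) ω : ℕ) : ℝ≥0∞) ∂P < ⊤ := by
    rw [lintegral_congr hprod_cast, hEprod]
    exact ENNReal.mul_lt_top (hpefin (n+k))
      (ENNReal.mul_lt_top hPfin
        (ENNReal.mul_lt_top (ENNReal.mul_lt_top (hpefin n) (hμfin n)) hqefin))
  have hintprod : Integrable (fun ω => (Zt n ω : ℝ) * (Zt (n+k) ω : ℝ)) P := by
    have h := integrable_nat (F := fun ω : Ω => Zt n ω * Zt (n+k) ω)
      ((hZta n).mul (hZta (n+k))) hprodfin.ne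
    have he : (fun ω => ((Zt n ω * Zt (n+k) ω : ℕ) : ℝ))
        = fun ω => (Zt n ω : ℝ) * (Zt (n+k) ω : ℝ) := funext fun ω => by push_cast; rfl
    rwa [he] at h
  have hTint : ∫ ω, (Zt n ω : ℝ) * (Zt (n+k) ω : ℝ) ∂P
      = (pe (n+k) * ((∏ i ∈ Finset.range (k-1), μe (n+1+i)) * (pe n * μe n * qe))).toReal := by
    have h := integral_nat_eq (P := P) (F := fun ω : Ω => Zt n ω * Zt (n+k) ω)
      ((hZta n).mul (hZta (n+k)))
    have he : (fun ω => ((Zt n ω * Zt (n+k) ω : ℕ) : ℝ))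
        = fun ω => (Zt n ω : ℝ) * (Zt (n+k) ω : ℝ) := funext fun ω => by push_cast; rfl
    rw [he] at h
    rw [h, lintegral_congr hprod_cast, hEprod]
  -- squares and variance
  have hsqcast : ∀ ω, ((Z n ω * Z n ω : ℕ) : ℝ≥0∞)
      = ((Z n ω : ℕ) : ℝ≥0∞) * ((Z n ω : ℕ) : ℝ≥0∞) := fun ω => by push_cast; rfl
  have hsqefin' : ∫⁻ ω, ((Z n ω * Z n ω : ℕ) : ℝ≥0∞) ∂P < ⊤ := by
    rw [lintegral_congr hsqcast]; exact hsqefin n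
  have hintsq : Integrable (fun ω => (Z n ω : ℝ)^2) P := by
    have h := integrable_nat (F := fun ω : Ω => Z n ω * Z n ω) ((hZa n).mul (hZa n)) hsqefin'.ne
    have he : (fun ω => ((Z n ω * Z n ω : ℕ) : ℝ)) = fun ω => (Z n ω : ℝ)^2 :=
      funext fun ω => by push_cast; ring
    rwa [he] at h
  have hQ : ∫ ω, (Z n ω : ℝ)^2 ∂P = (sqe n).toReal := by
    have h := integral_nat_eq (P := P) (F := fun ω : Ω => Z n ω * Z n ω) ((hZa n).mul (hZa n))
    have he : (fun ω => ((Z n ω * Z n ω : ℕ) : ℝ)) = fun ω => (Z n ω : ℝ)^2 :=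
      funext fun ω => by push_cast; ring
    rw [he] at h
    rw [h, lintegral_congr hsqcast]
  have hmem : MemLp (fun ω => (Z n ω : ℝ)) 2 P :=
    (memLp_two_iff_integrable_sq (hintZ n).aestronglyMeasurable).2 hintsq
  have hvar : variance (fun ω => (Z n ω : ℝ)) P = (sqe n).toReal - ((me n).toReal)^2 := by
    rw [variance_eq_sub hmem]
    have h1 : (∫ ω, ((fun ω => (Z n ω : ℝ))^2) ω ∂P) = (sqe n).toReal := by
      rw [← hQ]; exact integral_congr_ae (Filter.Eventually.of_forall fun ω => by simp [sqe])
    rw [h1, hZreal n]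
  -- qe real value
  have hqe_real : qe.toReal = (sqe n).toReal - (me n).toReal := by
    have h := integral_nat_eq (P := P) (F := fun ω : Ω => Z n ω * (Z n ω - 1))
      ((hZa n).mul ((hZa n).sub measurable_const))
    have he : (fun ω => ((Z n ω * (Z n ω - 1) : ℕ) : ℝ))
        = fun ω => (Z n ω : ℝ)^2 - (Z n ω : ℝ) := funext fun ω => cast_pred_real (Z n ω)
    rw [he] at h
    rw [hqe_def, ← h, integral_sub hintsq (hintZ n), hQ, hZreal n]
  -- assemble
  have hcov : cov P (fun ω => (Zt n ω : ℝ)) (fun ω => (Zt (n+k) ω : ℝ))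
      = ∫ ω, (Zt n ω : ℝ) * (Zt (n+k) ω : ℝ) ∂P
        - (∫ ω, (Zt n ω : ℝ) ∂P) * ∫ ω, (Zt (n+k) ω : ℝ) ∂P :=
    cov_eq' (hintZt n) (hintZt (n+k)) hintprod
  -- real abbreviations
  set A : ℝ := (me n).toReal with hA_def
  set Q : ℝ := (sqe n).toReal with hQ_def
  set μr : ℝ := (μe n).toReal with hμr_def
  set Pr : ℝ := ((∏ i ∈ Finset.range (k-1), μe (n+1+i))).toReal with hPr_def
  have hpn : (pe n).toReal = p n := by rw [hpeP n]; exact hp n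
  have hpnk : (pe (n+k)).toReal = p (n+k) := by rw [hpeP (n+k)]; exact hp (n+k)
  have hApos : 0 < A := by rw [hA_def, ← hZreal n]; exact hm
  have hT : ∫ ω, (Zt n ω : ℝ) * (Zt (n+k) ω : ℝ) ∂P
      = p (n+k) * (Pr * (p n * μr * (Q - A))) := by
    rw [hTint]
    simp only [ENNReal.toReal_mul]
    rw [hpn, hpnk, hqe_real]
  have hEZtn : ∫ ω, (Zt n ω : ℝ) ∂P = p n * A := by
    rw [hZtreal n, hEZt n, ENNReal.toReal_mul, hpn]
  have hEZtnk : ∫ ω, (Zt (n+k) ω : ℝ) ∂P = p (n+k) * (Pr * (μr * A)) := by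
    rw [hZtreal (n+k), hEZt (n+k), ENNReal.toReal_mul, hpnk, hmenk]
    simp only [ENNReal.toReal_mul]; rfl
  have hmk : ∫ ω, (Z (n+k) ω : ℝ) ∂P = Pr * (μr * A) := by
    rw [hZreal (n+k), hmenk]
    simp only [ENNReal.toReal_mul]; rfl
  rw [hcov, hT, hEZtn, hEZtnk, hvar, hmk, hZreal n]
  rw [← hA_def]
  field_simp
  ring
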